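/- Let H be a locally compact Hausdorff groupoid with open source map and let X be a free and proper right H-space with open anchor map σ : X → H⁰. Then the quotient G = (X ×_σ,σ X^op)/H of the fibred product by the diagonal H-action, with source and range s[x,y^op] = [y,y^op], r[x,y^op] = [x,x^op], and multiplication [x,y^op]·[y,z^op] = [x,z^op], is a locally compact Hausdorff groupoid with open source map, acting freely and properly on the left of X via [x,y^op]·y = x, and X is a (G,H)-groupoid equivalence. -/

import Mathlib

/- Statement 4: If H is a locally compact Hausdorff groupoid with open source map and X a
free and proper right H-space with open anchor map, then the quotient
G = (X ×_σ,σ X^op)/H is a locally compact Hausdorff groupoid with open source map acting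
freely and properly on the left of X, and X is a (G, H)-groupoid equivalence. -/

/-- A topological groupoid: a topological space `G` with source and range maps (valued in the
units, viewed inside `G`), a partially defined multiplication, and inversion, all continuous. -/
structure TopGroupoid (G : Type*) [TopologicalSpace G] : Type _ where
  src : G → G
  rng : G → G
  mul : (g h : G) → src g = rng h → G
  inv : G → G
  rng_src : ∀ g, rng (src g) = src g
  src_src : ∀ g, src (src g) = src g
  src_rng : ∀ g, src (rng g) = rng g
  rng_rng : ∀ g, rng (rng g) = rng g
  src_mul : ∀ g h hgh, src (mul g h hgh) = src h
  rng_mul : ∀ g h hgh, rng (mul g h hgh) = rng g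
  mul_assoc : ∀ g h k (hgh : src g = rng h) (hhk : src h = rng k)
    (h₁ : src (mul g h hgh) = rng k) (h₂ : src g = rng (mul h k hhk)),
    mul (mul g h hgh) k h₁ = mul g (mul h k hhk) h₂
  src_inv : ∀ g, src (inv g) = rng g
  rng_inv : ∀ g, rng (inv g) = src g
  mul_inv : ∀ g (h : src g = rng (inv g)), mul g (inv g) h = rng g
  inv_mul : ∀ g (h : src (inv g) = rng g), mul (inv g) g h = src g
  mul_src : ∀ g (h : src g = rng (src g)), mul g (src g) h = g
  rng_mul' : ∀ g (h : src (rng g) = rng g), mul (rng g) g h = g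
  continuous_src : Continuous src
  continuous_rng : Continuous rng
  continuous_inv : Continuous inv
  continuous_mul : Continuous (fun p : {p : G × G // src p.1 = rng p.2} =>
    mul p.1.1 p.1.2 p.2)

namespace TopGroupoid

variable {G : Type*} [TopologicalSpace G] (𝒢 : TopGroupoid G)

/-- The unit space of the groupoid, viewed as a subset of `G`. -/
def units : Set G := Set.range 𝒢.rng

/-- The source map is open (onto the unit space, with its subspace topology). -/
def OpenSource : Prop :=
  ∀ U : Set G, IsOpen U → ∃ V : Set G, IsOpen V ∧ 𝒢.src '' U = V ∩ 𝒢.units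

end TopGroupoid

/-- A continuous right action of a topological groupoid `H` on a topological space `X`,
along an anchor map `σ : X → H` (valued in the units of `H`). -/
structure RightGroupoidAction {H : Type*} [TopologicalSpace H] (𝒢 : TopGroupoid H)
    (X : Type*) [TopologicalSpace X] : Type _ where
  anchor : X → H
  anchor_unit : ∀ x, 𝒢.rng (anchor x) = anchor x
  continuous_anchor : Continuous anchor
  act : (x : X) → (h : H) → anchor x = 𝒢.rng h → X
  anchor_act : ∀ x h hc, anchor (act x h hc) = 𝒢.src h
  act_unit : ∀ x (hc : anchor x = 𝒢.rng (anchor x)), act x (anchor x) hc = x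
  act_mul : ∀ x h h' (hc : anchor x = 𝒢.rng h) (hc' : anchor (act x h hc) = 𝒢.rng h')
    (hhh : 𝒢.src h = 𝒢.rng h') (hc'' : anchor x = 𝒢.rng (𝒢.mul h h' hhh)),
    act (act x h hc) h' hc' = act x (𝒢.mul h h' hhh) hc''
  continuous_act : Continuous (fun p : {p : X × H // anchor p.1 = 𝒢.rng p.2} =>
    act p.1.1 p.1.2 p.2)

namespace RightGroupoidAction

variable {H : Type*} [TopologicalSpace H] {𝒢 : TopGroupoid H}
  {X : Type*} [TopologicalSpace X] (ρ : RightGroupoidAction 𝒢 X)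

/-- The action is free: only units act trivially. -/
def IsFree : Prop := ∀ x h hc, ρ.act x h hc = x → h = ρ.anchor x

/-- The action is proper: `(x, h) ↦ (x, x·h)` is a proper map. -/
def IsProper : Prop :=
  IsProperMap (fun p : {p : X × H // ρ.anchor p.1 = 𝒢.rng p.2} =>
    ((p.1.1, ρ.act p.1.1 p.1.2 p.2) : X × X))

/-- The anchor map is open onto the unit space. -/
def OpenAnchor : Prop :=
  ∀ U : Set X, IsOpen U → ∃ V : Set H, IsOpen V ∧ ρ.anchor '' U = V ∩ 𝒢.units

/-- The anchor map is surjective onto the unit space. -/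
def SurjAnchor : Prop := ∀ u ∈ 𝒢.units, ∃ x, ρ.anchor x = u

/-- `X` is a principal (free and proper) right `H`-space. -/
def IsPrincipal : Prop := ρ.IsFree ∧ ρ.IsProper

/-- Two points of the fibred product `X ×_{σ,σ} X` are equivalent when they differ by the
diagonal action of `H`. -/
def diagRel (p q : {p : X × X // ρ.anchor p.1 = ρ.anchor p.2}) : Prop :=
  ∃ (h : H) (hc₁ : ρ.anchor p.1.1 = 𝒢.rng h) (hc₂ : ρ.anchor p.1.2 = 𝒢.rng h),
    q.1.1 = ρ.act p.1.1 h hc₁ ∧ q.1.2 = ρ.act p.1.2 h hc₂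

end RightGroupoidAction

/-- A continuous left action of a topological groupoid. -/
structure LeftGroupoidAction {G : Type*} [TopologicalSpace G] (𝒢 : TopGroupoid G)
    (X : Type*) [TopologicalSpace X] : Type _ where
  anchor : X → G
  anchor_unit : ∀ x, 𝒢.rng (anchor x) = anchor x
  continuous_anchor : Continuous anchor
  act : (g : G) → (x : X) → 𝒢.src g = anchor x → X
  anchor_act : ∀ g x hc, anchor (act g x hc) = 𝒢.rng g
  act_unit : ∀ x (hc : 𝒢.src (anchor x) = anchor x), act (anchor x) x hc = x
  act_mul : ∀ g g' x (hc : 𝒢.src g' = anchor x) (hc' : 𝒢.src g = anchor (act g' x hc))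
    (hgg : 𝒢.src g = 𝒢.rng g') (hc'' : 𝒢.src (𝒢.mul g g' hgg) = anchor x),
    act g (act g' x hc) hc' = act (𝒢.mul g g' hgg) x hc''
  continuous_act : Continuous (fun p : {p : G × X // 𝒢.src p.1 = anchor p.2} =>
    act p.1.1 p.1.2 p.2)

namespace LeftGroupoidAction

variable {G : Type*} [TopologicalSpace G] {𝒢 : TopGroupoid G}
  {X : Type*} [TopologicalSpace X] (lam : LeftGroupoidAction 𝒢 X)

def IsFree : Prop := ∀ g x hc, lam.act g x hc = x → g = lam.anchor x

def IsProper : Prop :=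
  IsProperMap (fun p : {p : G × X // 𝒢.src p.1 = lam.anchor p.2} =>
    ((lam.act p.1.1 p.1.2 p.2, p.1.2) : X × X))

def OpenAnchor : Prop :=
  ∀ U : Set X, IsOpen U → ∃ V : Set G, IsOpen V ∧ lam.anchor '' U = V ∩ 𝒢.units

def SurjAnchor : Prop := ∀ u ∈ 𝒢.units, ∃ x, lam.anchor x = u

def IsPrincipal : Prop := lam.IsFree ∧ lam.IsProper

end LeftGroupoidAction

/-- A `(G, H)`-groupoid equivalence: commuting principal left `G`- and right `H`-actions on
`X` whose anchor maps are open surjections onto the unit spaces and identify `X/H` with `G⁰`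
and `G\X` with `H⁰` (encoded: the fibres of each anchor map are exactly the orbits of the
other action). -/
structure GroupoidEquivalence {G H : Type*} [TopologicalSpace G] [TopologicalSpace H]
    (𝒢 : TopGroupoid G) (ℋ : TopGroupoid H) (X : Type*) [TopologicalSpace X] : Type _ where
  lact : LeftGroupoidAction 𝒢 X
  ract : RightGroupoidAction ℋ X
  commute : ∀ g x h (hcl : 𝒢.src g = lact.anchor x) (hcr : ract.anchor x = ℋ.rng h)
    (hcr' : ract.anchor (lact.act g x hcl) = ℋ.rng h)
    (hcl' : 𝒢.src g = lact.anchor (ract.act x h hcr)),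
    ract.act (lact.act g x hcl) h hcr' = lact.act g (ract.act x h hcr) hcl'
  lact_principal : lact.IsPrincipal
  ract_principal : ract.IsPrincipal
  lact_openAnchor : lact.OpenAnchor
  ract_openAnchor : ract.OpenAnchor
  lact_surjAnchor : lact.SurjAnchor
  ract_surjAnchor : ract.SurjAnchor
  /-- the right anchor `σ` is invariant under the left action and its fibres are the
  `G`-orbits -/
  ract_anchor_lact : ∀ g x hc, ract.anchor (lact.act g x hc) = ract.anchor x
  ract_anchor_eq_iff : ∀ x y, ract.anchor x = ract.anchor y ↔
    ∃ g hc, lact.act g y hc = x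
  /-- the left anchor `ρ` is invariant under the right action and its fibres are the
  `H`-orbits -/
  lact_anchor_ract : ∀ x h hc, lact.anchor (ract.act x h hc) = lact.anchor x
  lact_anchor_eq_iff : ∀ x y, lact.anchor x = lact.anchor y ↔
    ∃ h hc, ract.act y h hc = x

open RightGroupoidAction

namespace Imp

open Topology Filter Set Classical

noncomputable section

variable {H X : Type*} [TopologicalSpace H] [TopologicalSpace X]
variable {𝒢 : TopGroupoid H} {ra : RightGroupoidAction 𝒢 X}

/-- Total version of groupoid multiplication. -/
noncomputable def gmul (𝒢 : TopGroupoid H) (g h : H) : H :=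
  if hc : 𝒢.src g = 𝒢.rng h then 𝒢.mul g h hc else g

/-- Total version of the right action. -/
noncomputable def gact (ra : RightGroupoidAction 𝒢 X) (x : X) (h : H) : X :=
  if hc : ra.anchor x = 𝒢.rng h then ra.act x h hc else x

lemma gmul_eq {g h : H} (hc : 𝒢.src g = 𝒢.rng h) : gmul 𝒢 g h = 𝒢.mul g h hc := dif_pos hc

lemma gact_eq {x : X} {h : H} (hc : ra.anchor x = 𝒢.rng h) :
    gact ra x h = ra.act x h hc := dif_pos hc

lemma src_gmul {g h : H} (hc : 𝒢.src g = 𝒢.rng h) : 𝒢.src (gmul 𝒢 g h) = 𝒢.src h := by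
  rw [gmul_eq hc]; exact 𝒢.src_mul g h hc

lemma rng_gmul {g h : H} (hc : 𝒢.src g = 𝒢.rng h) : 𝒢.rng (gmul 𝒢 g h) = 𝒢.rng g := by
  rw [gmul_eq hc]; exact 𝒢.rng_mul g h hc

lemma anchor_gact {x : X} {h : H} (hc : ra.anchor x = 𝒢.rng h) :
    ra.anchor (gact ra x h) = 𝒢.src h := by
  rw [gact_eq hc]; exact ra.anchor_act x h hc

lemma gact_gact {x : X} {h k : H} (hc : ra.anchor x = 𝒢.rng h) (hhk : 𝒢.src h = 𝒢.rng k) :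
    gact ra (gact ra x h) k = gact ra x (gmul 𝒢 h k) := by
  have hc' : ra.anchor (gact ra x h) = 𝒢.rng k := (anchor_gact hc).trans hhk
  have hc'' : ra.anchor x = 𝒢.rng (gmul 𝒢 h k) := by rw [rng_gmul hhk]; exact hc
  rw [gact_eq hc, gmul_eq hhk] at *
  rw [gact_eq hc', gact_eq hc'']
  exact ra.act_mul x h k hc ((ra.anchor_act x h hc).trans hhk) hhk hc''

lemma gact_anchor (x : X) : gact ra x (ra.anchor x) = x := by
  have hc : ra.anchor x = 𝒢.rng (ra.anchor x) := (ra.anchor_unit x).symm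
  rw [gact_eq hc]; exact ra.act_unit x hc

lemma gact_anchor' {x : X} {u : X} (h : ra.anchor x = ra.anchor u) :
    gact ra x (ra.anchor u) = x := by rw [← h]; exact gact_anchor x

lemma gmul_inv (g : H) : gmul 𝒢 g (𝒢.inv g) = 𝒢.rng g := by
  have hc : 𝒢.src g = 𝒢.rng (𝒢.inv g) := (𝒢.rng_inv g).symm
  rw [gmul_eq hc]; exact 𝒢.mul_inv g hc

lemma ginv_gmul (g : H) : gmul 𝒢 (𝒢.inv g) g = 𝒢.src g := by
  have hc : 𝒢.src (𝒢.inv g) = 𝒢.rng g := 𝒢.src_inv g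
  rw [gmul_eq hc]; exact 𝒢.inv_mul g hc

lemma gmul_src (g : H) : gmul 𝒢 g (𝒢.src g) = g := by
  have hc : 𝒢.src g = 𝒢.rng (𝒢.src g) := (𝒢.rng_src g).symm
  rw [gmul_eq hc]; exact 𝒢.mul_src g hc

lemma grng_gmul (g : H) : gmul 𝒢 (𝒢.rng g) g = g := by
  have hc : 𝒢.src (𝒢.rng g) = 𝒢.rng g := 𝒢.src_rng g
  rw [gmul_eq hc]; exact 𝒢.rng_mul' g hc

lemma gmul_assoc {g h k : H} (hgh : 𝒢.src g = 𝒢.rng h) (hhk : 𝒢.src h = 𝒢.rng k) :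
    gmul 𝒢 (gmul 𝒢 g h) k = gmul 𝒢 g (gmul 𝒢 h k) := by
  have h₁ : 𝒢.src (gmul 𝒢 g h) = 𝒢.rng k := (src_gmul hgh).trans hhk
  have h₂ : 𝒢.src g = 𝒢.rng (gmul 𝒢 h k) := by rw [rng_gmul hhk]; exact hgh
  rw [gmul_eq hgh, gmul_eq hhk] at *
  rw [gmul_eq h₁, gmul_eq h₂]
  exact 𝒢.mul_assoc g h k hgh hhk h₁ h₂

lemma gact_inv {x : X} {h : H} (hc : ra.anchor x = 𝒢.rng h) :
    gact ra (gact ra x h) (𝒢.inv h) = x := by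
  have hhk : 𝒢.src h = 𝒢.rng (𝒢.inv h) := (𝒢.rng_inv h).symm
  rw [gact_gact hc hhk, gmul_inv, ← hc, gact_anchor]

lemma gact_injective (hfree : ra.IsFree) {x : X} {h h' : H}
    (hc : ra.anchor x = 𝒢.rng h) (hc' : ra.anchor x = 𝒢.rng h')
    (he : gact ra x h = gact ra x h') : h = h' := by
  have hsrc : 𝒢.src h = 𝒢.src h' := by
    rw [← anchor_gact hc, ← anchor_gact hc', he]
  have hhk : 𝒢.src h = 𝒢.rng (𝒢.inv h') := by rw [𝒢.rng_inv h']; exact hsrc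
  have e1 : gact ra x (gmul 𝒢 h (𝒢.inv h')) = x := by
    rw [← gact_gact hc hhk, he, gact_inv hc']
  have hcM : ra.anchor x = 𝒢.rng (gmul 𝒢 h (𝒢.inv h')) := by rw [rng_gmul hhk]; exact hc
  have e2 : gmul 𝒢 h (𝒢.inv h') = ra.anchor x := by
    apply hfree x _ hcM
    rw [← gact_eq hcM]; exact e1
  have hinv : 𝒢.src (𝒢.inv h') = 𝒢.rng h' := 𝒢.src_inv h'
  calc h = gmul 𝒢 h (𝒢.src h) := (gmul_src h).symm
    _ = gmul 𝒢 h (gmul 𝒢 (𝒢.inv h') h') := by rw [ginv_gmul, hsrc]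
    _ = gmul 𝒢 (gmul 𝒢 h (𝒢.inv h')) h' := (gmul_assoc hhk hinv).symm
    _ = gmul 𝒢 (𝒢.rng h') h' := by rw [e2, hc']
    _ = h' := grng_gmul h'

end
end Imp
namespace Imp
open Topology Filter Set Classical
noncomputable section

variable {H X : Type*} [TopologicalSpace H] [TopologicalSpace X]
variable {𝒢 : TopGroupoid H} {ra : RightGroupoidAction 𝒢 X}

/-- Two points lie in the same `H`-orbit. -/
def SameOrbit (ra : RightGroupoidAction 𝒢 X) (x y : X) : Prop :=
  ∃ h, ra.anchor x = 𝒢.rng h ∧ gact ra x h = y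

/-- The translation function: the unique element carrying `x` to `y`. -/
noncomputable def tau (ra : RightGroupoidAction 𝒢 X) (x y : X) : H :=
  if ho : SameOrbit ra x y then ho.choose else ra.anchor x

lemma tau_comp {x y : X} (ho : SameOrbit ra x y) :
    ra.anchor x = 𝒢.rng (tau ra x y) := by
  rw [tau, dif_pos ho]; exact ho.choose_spec.1

lemma tau_act {x y : X} (ho : SameOrbit ra x y) : gact ra x (tau ra x y) = y := by
  rw [tau, dif_pos ho]; exact ho.choose_spec.2

lemma tau_unique (hfree : ra.IsFree) {x y : X} {h : H}
    (hc : ra.anchor x = 𝒢.rng h) (he : gact ra x h = y) : tau ra x y = h := by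
  have ho : SameOrbit ra x y := ⟨h, hc, he⟩
  exact gact_injective hfree (tau_comp ho) hc ((tau_act ho).trans he.symm)

lemma sameOrbit_refl (x : X) : SameOrbit ra x x :=
  ⟨ra.anchor x, (ra.anchor_unit x).symm, gact_anchor x⟩

lemma sameOrbit_symm {x y : X} (h : SameOrbit ra x y) : SameOrbit ra y x := by
  obtain ⟨h, hc, he⟩ := h
  refine ⟨𝒢.inv h, ?_, ?_⟩
  · rw [← he, anchor_gact hc, 𝒢.rng_inv]
  · rw [← he, gact_inv hc]

lemma sameOrbit_trans {x y z : X} (h1 : SameOrbit ra x y) (h2 : SameOrbit ra y z) :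
    SameOrbit ra x z := by
  obtain ⟨h, hc, he⟩ := h1
  obtain ⟨k, hk, hek⟩ := h2
  have hhk : 𝒢.src h = 𝒢.rng k := by rw [← anchor_gact hc, he]; exact hk
  refine ⟨gmul 𝒢 h k, ?_, ?_⟩
  · rw [rng_gmul hhk]; exact hc
  · rw [← gact_gact hc hhk, he]; exact hek

lemma tau_self (hfree : ra.IsFree) (x : X) : tau ra x x = ra.anchor x :=
  tau_unique hfree (ra.anchor_unit x).symm (gact_anchor x)

/-- Key lemma 1: the value `a · τ(b, x)` only depends on the orbit of the pair `(a,b)`. -/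
lemma key1 (hfree : ra.IsFree) {a b a' b' x : X} {h : H}
    (hab : ra.anchor a = ra.anchor b) (ho : SameOrbit ra b x)
    (hc : ra.anchor a = 𝒢.rng h) (ha' : a' = gact ra a h) (hb' : b' = gact ra b h) :
    gact ra a' (tau ra b' x) = gact ra a (tau ra b x) := by
  set τ := tau ra b x with hτ
  have hcb : ra.anchor b = 𝒢.rng h := hab ▸ hc
  have hτc : ra.anchor b = 𝒢.rng τ := tau_comp ho
  have hsrcinv : 𝒢.src (𝒢.inv h) = 𝒢.rng τ := by rw [𝒢.src_inv, ← hcb]; exact hτc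
  have hhinv : 𝒢.src h = 𝒢.rng (𝒢.inv h) := (𝒢.rng_inv h).symm
  have hrngm : 𝒢.rng (gmul 𝒢 (𝒢.inv h) τ) = 𝒢.src h := by
    rw [rng_gmul hsrcinv, 𝒢.rng_inv]
  have chain : ∀ c : X, ra.anchor c = 𝒢.rng h →
      gact ra (gact ra c h) (gmul 𝒢 (𝒢.inv h) τ) = gact ra c τ := by
    intro c hcc
    have hrr : 𝒢.rng h = 𝒢.rng τ := hcb.symm.trans hτc
    rw [gact_gact hcc (by rw [hrngm]), ← gmul_assoc hhinv hsrcinv, gmul_inv, hrr, grng_gmul]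
  -- τ(b', x) = (inv h) * τ
  have hb'x : gact ra b' (gmul 𝒢 (𝒢.inv h) τ) = x := by
    rw [hb', chain b hcb, tau_act ho]
  have hτ' : tau ra b' x = gmul 𝒢 (𝒢.inv h) τ := by
    apply tau_unique hfree _ hb'x
    rw [hb', anchor_gact hcb, ← hrngm]
  rw [hτ', ha', chain a hc]

/-- Key lemma 2: translating the target. -/
lemma key2 (hfree : ra.IsFree) {b u : X} {k : H} (ho : SameOrbit ra b u)
    (hk : ra.anchor u = 𝒢.rng k) :
    tau ra b (gact ra u k) = gmul 𝒢 (tau ra b u) k := by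
  have hτc : ra.anchor b = 𝒢.rng (tau ra b u) := tau_comp ho
  have hsk : 𝒢.src (tau ra b u) = 𝒢.rng k := by
    rw [← anchor_gact hτc, tau_act ho]; exact hk
  apply tau_unique hfree
  · rw [rng_gmul hsk]; exact hτc
  · rw [← gact_gact hτc hsk, tau_act ho]

lemma diagRel_iff {p q : {p : X × X // ra.anchor p.1 = ra.anchor p.2}} :
    ra.diagRel p q ↔ ∃ h, ra.anchor p.1.1 = 𝒢.rng h ∧
      q.1.1 = gact ra p.1.1 h ∧ q.1.2 = gact ra p.1.2 h := by
  constructor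
  · rintro ⟨h, hc1, hc2, he1, he2⟩
    exact ⟨h, hc1, by rw [gact_eq hc1]; exact he1, by rw [gact_eq hc2]; exact he2⟩
  · rintro ⟨h, hc1, he1, he2⟩
    have hc2 : ra.anchor p.1.2 = 𝒢.rng h := p.2 ▸ hc1
    exact ⟨h, hc1, hc2, by rw [← gact_eq hc1]; exact he1, by rw [← gact_eq hc2]; exact he2⟩

lemma diagRel_equiv :
    Equivalence (ra.diagRel (X := X)) := by
  constructor
  · intro p
    rw [diagRel_iff]
    exact ⟨ra.anchor p.1.1, (ra.anchor_unit _).symm,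
      (gact_anchor _).symm, (gact_anchor' p.2.symm).symm⟩
  · intro p q hpq
    rw [diagRel_iff] at *
    obtain ⟨h, hc, he1, he2⟩ := hpq
    have hc2 : ra.anchor p.1.2 = 𝒢.rng h := p.2 ▸ hc
    refine ⟨𝒢.inv h, ?_, ?_, ?_⟩
    · rw [he1, anchor_gact hc, 𝒢.rng_inv]
    · rw [he1, gact_inv hc]
    · rw [he2, gact_inv hc2]
  · intro p q r hpq hqr
    rw [diagRel_iff] at *
    obtain ⟨h, hc, he1, he2⟩ := hpq
    obtain ⟨k, hk, hk1, hk2⟩ := hqr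
    have hc2 : ra.anchor p.1.2 = 𝒢.rng h := p.2 ▸ hc
    have hhk : 𝒢.src h = 𝒢.rng k := by rw [← anchor_gact hc, ← he1]; exact hk
    refine ⟨gmul 𝒢 h k, by rw [rng_gmul hhk]; exact hc, ?_, ?_⟩
    · rw [hk1, he1, gact_gact hc hhk]
    · rw [hk2, he2, gact_gact hc2 hhk]

lemma quot_mk_eq {p q : {p : X × X // ra.anchor p.1 = ra.anchor p.2}} :
    Quot.mk ra.diagRel p = Quot.mk ra.diagRel q ↔ ra.diagRel p q :=
  ⟨fun h => (diagRel_equiv).eqvGen_iff.mp (Quot.eqvGen_exact h), Quot.sound⟩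

end
end Imp
namespace Imp
open Topology Filter Set Classical
noncomputable section

variable {H X : Type*} [TopologicalSpace H] [TopologicalSpace X]
variable {𝒢 : TopGroupoid H} {ra : RightGroupoidAction 𝒢 X}

variable (ra) in
/-- Source map of the imprimitivity groupoid. -/
def GSrc : Quot ra.diagRel → Quot ra.diagRel :=
  Quot.lift (fun p => Quot.mk _ ⟨(p.1.2, p.1.2), rfl⟩) (by
    intro p q hpq
    rw [diagRel_iff] at hpq
    obtain ⟨h, hc, he1, he2⟩ := hpq
    apply Quot.sound
    rw [diagRel_iff]
    exact ⟨h, p.2 ▸ hc, he2, he2⟩)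

variable (ra) in
/-- Range map of the imprimitivity groupoid. -/
def GRng : Quot ra.diagRel → Quot ra.diagRel :=
  Quot.lift (fun p => Quot.mk _ ⟨(p.1.1, p.1.1), rfl⟩) (by
    intro p q hpq
    rw [diagRel_iff] at hpq
    obtain ⟨h, hc, he1, he2⟩ := hpq
    apply Quot.sound
    rw [diagRel_iff]
    exact ⟨h, hc, he1, he1⟩)

variable (ra) in
/-- Inverse map of the imprimitivity groupoid. -/
def GInv : Quot ra.diagRel → Quot ra.diagRel :=
  Quot.lift (fun p => Quot.mk _ ⟨(p.1.2, p.1.1), p.2.symm⟩) (by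
    intro p q hpq
    rw [diagRel_iff] at hpq
    obtain ⟨h, hc, he1, he2⟩ := hpq
    apply Quot.sound
    rw [diagRel_iff]
    exact ⟨h, p.2 ▸ hc, he2, he1⟩)

lemma GSrc_mk (p : {p : X × X // ra.anchor p.1 = ra.anchor p.2}) :
    GSrc ra (Quot.mk _ p) = Quot.mk _ ⟨(p.1.2, p.1.2), rfl⟩ := rfl

lemma GRng_mk (p : {p : X × X // ra.anchor p.1 = ra.anchor p.2}) :
    GRng ra (Quot.mk _ p) = Quot.mk _ ⟨(p.1.1, p.1.1), rfl⟩ := rfl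

lemma sameOrbit_of_srcrng {p p' : {p : X × X // ra.anchor p.1 = ra.anchor p.2}}
    (hcc' : GSrc ra (Quot.mk _ p) = GRng ra (Quot.mk _ p')) :
    SameOrbit ra p.1.2 p'.1.1 := by
  rw [GSrc_mk, GRng_mk, quot_mk_eq, diagRel_iff] at hcc'
  obtain ⟨h, hc, he1, he2⟩ := hcc'
  exact ⟨h, hc, he1.symm⟩

lemma anchor_pair {p p' : {p : X × X // ra.anchor p.1 = ra.anchor p.2}}
    (horb : SameOrbit ra p.1.2 p'.1.1) :
    ra.anchor (gact ra p.1.1 (tau ra p.1.2 p'.1.1)) = ra.anchor p'.1.2 := by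
  have h1 : ra.anchor p.1.1 = 𝒢.rng (tau ra p.1.2 p'.1.1) := p.2 ▸ tau_comp horb
  have h2 : ra.anchor p'.1.1 = 𝒢.src (tau ra p.1.2 p'.1.1) := by
    conv_lhs => rw [← tau_act horb]
    rw [anchor_gact (tau_comp horb)]
  rw [anchor_gact h1, ← p'.2, h2]

variable (ra) in
/-- Multiplication of the imprimitivity groupoid (total function version). -/
def GMul (c c' : Quot ra.diagRel) : Quot ra.diagRel :=
  if hσ : ra.anchor (gact ra c.out.1.1 (tau ra c.out.1.2 c'.out.1.1)) = ra.anchor c'.out.1.2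
  then Quot.mk _ ⟨(gact ra c.out.1.1 (tau ra c.out.1.2 c'.out.1.1), c'.out.1.2), hσ⟩
  else c

lemma GMul_eval (hfree : ra.IsFree)
    (p p' : {p : X × X // ra.anchor p.1 = ra.anchor p.2})
    (hcc' : GSrc ra (Quot.mk _ p) = GRng ra (Quot.mk _ p')) :
    GMul ra (Quot.mk _ p) (Quot.mk _ p') =
      Quot.mk _ ⟨(gact ra p.1.1 (tau ra p.1.2 p'.1.1), p'.1.2),
        anchor_pair (sameOrbit_of_srcrng hcc')⟩ := by
  have horb : SameOrbit ra p.1.2 p'.1.1 := sameOrbit_of_srcrng hcc'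
  set c := Quot.mk ra.diagRel p with hcdef
  set c' := Quot.mk ra.diagRel p' with hc'def
  have ho : Quot.mk ra.diagRel c.out = Quot.mk _ p := c.out_eq
  have ho' : Quot.mk ra.diagRel c'.out = Quot.mk _ p' := c'.out_eq
  have hrelo : ra.diagRel p c.out := quot_mk_eq.mp ho.symm
  have hrelo' : ra.diagRel p' c'.out := quot_mk_eq.mp ho'.symm
  have hcc'' : GSrc ra (Quot.mk _ p) = GRng ra (Quot.mk _ c'.out) := by
    rw [ho']; exact hcc'
  have hcco : GSrc ra (Quot.mk _ c.out) = GRng ra (Quot.mk _ c'.out) := by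
    rw [ho, ho']; exact hcc'
  have horbo : SameOrbit ra c.out.1.2 c'.out.1.1 := sameOrbit_of_srcrng hcco
  have horbp : SameOrbit ra p.1.2 c'.out.1.1 := sameOrbit_of_srcrng hcc''
  -- step 1 : replace `c.out` by `p`
  obtain ⟨h, hch, he1, he2⟩ := diagRel_iff.mp hrelo
  have step1 : gact ra c.out.1.1 (tau ra c.out.1.2 c'.out.1.1)
      = gact ra p.1.1 (tau ra p.1.2 c'.out.1.1) :=
    key1 hfree p.2 horbp hch he1 he2
  -- step 2 : replace `c'.out` by `p'`
  obtain ⟨k, hck, hk1, hk2⟩ := diagRel_iff.mp hrelo'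
  have hτc : ra.anchor p.1.1 = 𝒢.rng (tau ra p.1.2 p'.1.1) := p.2 ▸ tau_comp horb
  have hsk : 𝒢.src (tau ra p.1.2 p'.1.1) = 𝒢.rng k := by
    rw [← anchor_gact (tau_comp horb), tau_act horb]; exact hck
  have step2 : gact ra p.1.1 (tau ra p.1.2 c'.out.1.1)
      = gact ra (gact ra p.1.1 (tau ra p.1.2 p'.1.1)) k := by
    rw [hk1, key2 hfree horb hck, ← gact_gact hτc hsk]
  have pf1 : ra.anchor (gact ra p.1.1 (tau ra p.1.2 p'.1.1)) = 𝒢.rng k := by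
    rw [anchor_gact hτc]; exact hsk
  have hdr : ra.diagRel
      ⟨(gact ra p.1.1 (tau ra p.1.2 p'.1.1), p'.1.2), anchor_pair horb⟩
      ⟨(gact ra c.out.1.1 (tau ra c.out.1.2 c'.out.1.1), c'.out.1.2),
        anchor_pair horbo⟩ :=
    diagRel_iff.mpr ⟨k, pf1, step1.trans step2, hk2⟩
  rw [GMul, dif_pos (anchor_pair horbo)]
  exact (Quot.sound hdr).symm

lemma GMul_spec (hfree : ra.IsFree) (x y z : X)
    (hxy : ra.anchor x = ra.anchor y) (hyz : ra.anchor y = ra.anchor z)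
    (hcc' : GSrc ra (Quot.mk _ ⟨(x, y), hxy⟩) = GRng ra (Quot.mk _ ⟨(y, z), hyz⟩)) :
    GMul ra (Quot.mk _ ⟨(x, y), hxy⟩) (Quot.mk _ ⟨(y, z), hyz⟩) =
      Quot.mk _ ⟨(x, z), hxy.trans hyz⟩ := by
  rw [GMul_eval hfree _ _ hcc']
  have hx : gact ra x (tau ra y y) = x := by
    rw [tau_self hfree, gact_anchor' hxy]
  exact congrArg _ (Subtype.ext (Prod.ext hx rfl))

end
end Imp
namespace Imp
open Topology Filter Set Classical
noncomputable section

variable {H X : Type*} [TopologicalSpace H] [TopologicalSpace X]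
variable {𝒢 : TopGroupoid H} {ra : RightGroupoidAction 𝒢 X}

lemma exists_rep (c : Quot ra.diagRel) :
    ∃ p : {p : X × X // ra.anchor p.1 = ra.anchor p.2}, c = Quot.mk _ p := by
  obtain ⟨p, hp⟩ := Quot.exists_rep c
  exact ⟨p, hp.symm⟩

lemma exists_rep_src {c : Quot ra.diagRel} {u : X}
    (hc : GSrc ra c = Quot.mk _ ⟨(u, u), rfl⟩) :
    ∃ (a : X) (ha : ra.anchor a = ra.anchor u), c = Quot.mk _ ⟨(a, u), ha⟩ := by
  obtain ⟨p, rfl⟩ := exists_rep c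
  rw [GSrc_mk, quot_mk_eq, diagRel_iff] at hc
  obtain ⟨h, hch, he1, he2⟩ := hc
  dsimp only at hch he1 he2
  have hc1 : ra.anchor p.1.1 = 𝒢.rng h := p.2 ▸ hch
  have ha : ra.anchor (gact ra p.1.1 h) = ra.anchor u := by
    rw [anchor_gact hc1, he1, anchor_gact hch]
  refine ⟨gact ra p.1.1 h, ha, Quot.sound (diagRel_iff.mpr ⟨h, hc1, rfl, he1⟩)⟩

lemma exists_rep_aligned {c c' : Quot ra.diagRel} (hcc' : GSrc ra c = GRng ra c') :
    ∃ (x y z : X) (hxy : ra.anchor x = ra.anchor y) (hyz : ra.anchor y = ra.anchor z),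
      c = Quot.mk _ ⟨(x, y), hxy⟩ ∧ c' = Quot.mk _ ⟨(y, z), hyz⟩ := by
  obtain ⟨p', rfl⟩ := exists_rep c'
  rw [GRng_mk] at hcc'
  obtain ⟨a, ha, hrep⟩ := exists_rep_src hcc'
  exact ⟨a, p'.1.1, p'.1.2, ha, p'.2, hrep, congrArg _ (Subtype.ext rfl)⟩

/-- The left action of the imprimitivity groupoid on `X` (total version). -/
def LAct (ra : RightGroupoidAction 𝒢 X) (c : Quot ra.diagRel) (x : X) : X :=
  gact ra c.out.1.1 (tau ra c.out.1.2 x)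

lemma LAct_eval (hfree : ra.IsFree) (p : {p : X × X // ra.anchor p.1 = ra.anchor p.2})
    (x : X) (horb : SameOrbit ra p.1.2 x) :
    LAct ra (Quot.mk _ p) x = gact ra p.1.1 (tau ra p.1.2 x) := by
  have ho : Quot.mk ra.diagRel (Quot.mk ra.diagRel p).out = Quot.mk _ p :=
    (Quot.mk ra.diagRel p).out_eq
  obtain ⟨h, hch, he1, he2⟩ := diagRel_iff.mp (quot_mk_eq.mp ho.symm)
  exact key1 hfree p.2 horb hch he1 he2

lemma LAct_spec (hfree : ra.IsFree) (a x : X) (hax : ra.anchor a = ra.anchor x) :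
    LAct ra (Quot.mk _ ⟨(a, x), hax⟩) x = a := by
  rw [LAct_eval hfree _ x (sameOrbit_refl x)]
  show gact ra a (tau ra x x) = a
  rw [tau_self hfree, gact_anchor' hax]

lemma sameOrbit_of_anchor {c : Quot ra.diagRel} {x : X}
    (hc : GSrc ra c = Quot.mk _ ⟨(x, x), rfl⟩)
    (p : {p : X × X // ra.anchor p.1 = ra.anchor p.2}) (hp : c = Quot.mk _ p) :
    SameOrbit ra p.1.2 x := by
  rw [hp, GSrc_mk, quot_mk_eq, diagRel_iff] at hc
  obtain ⟨h, hch, he1, he2⟩ := hc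
  dsimp only at hch he1 he2
  exact ⟨h, hch, he1.symm⟩

/-- Characterisation of the units of the quotient groupoid. -/
lemma mem_units_iff {c : Quot ra.diagRel} :
    c ∈ Set.range (GRng ra) ↔ ∃ e : X, c = Quot.mk _ ⟨(e, e), rfl⟩ := by
  constructor
  · rintro ⟨d, rfl⟩
    obtain ⟨p, rfl⟩ := exists_rep d
    exact ⟨p.1.1, GRng_mk p⟩
  · rintro ⟨e, rfl⟩
    exact ⟨Quot.mk _ ⟨(e, e), rfl⟩, rfl⟩

lemma diag_of_eq_diag {p : {p : X × X // ra.anchor p.1 = ra.anchor p.2}} {e : X}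
    (h : Quot.mk ra.diagRel ⟨(e, e), rfl⟩ = Quot.mk ra.diagRel p) :
    p.1.1 = p.1.2 := by
  obtain ⟨h, hch, he1, he2⟩ := diagRel_iff.mp (quot_mk_eq.mp h)
  dsimp only at hch he1 he2
  rw [he1, he2]

end
end Imp
namespace Imp
open Topology Filter Set Classical
noncomputable section

variable {H X : Type*} [TopologicalSpace H] [TopologicalSpace X]
variable {𝒢 : TopGroupoid H} {ra : RightGroupoidAction 𝒢 X}

lemma ginv_ginv (g : H) : 𝒢.inv (𝒢.inv g) = g := by
  have h1 : 𝒢.src (𝒢.inv (𝒢.inv g)) = 𝒢.rng (𝒢.inv g) := 𝒢.src_inv _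
  have h2 : 𝒢.src (𝒢.inv g) = 𝒢.rng g := 𝒢.src_inv g
  have key := (gmul_assoc h1 h2).symm
  rw [ginv_gmul (𝒢.inv g), ginv_gmul g, h2, grng_gmul] at key
  have h3 : 𝒢.src (𝒢.inv (𝒢.inv g)) = 𝒢.src g := (𝒢.src_inv _).trans (𝒢.rng_inv g)
  rw [← h3, gmul_src] at key
  exact key

lemma isOpenMap_ginv : IsOpenMap 𝒢.inv :=
  (Homeomorph.mk ⟨𝒢.inv, 𝒢.inv, ginv_ginv, ginv_ginv⟩
    𝒢.continuous_inv 𝒢.continuous_inv).isOpenMap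

lemma anchor_mem_units (x : X) : ra.anchor x ∈ 𝒢.units :=
  ⟨ra.anchor x, ra.anchor_unit x⟩

/-- The space of composable pairs for the diagonal action. -/
abbrev DD (ra : RightGroupoidAction 𝒢 X) :=
  {t : (X × X) × H // (ra.anchor t.1.1 = ra.anchor t.1.2) ∧ ra.anchor t.1.1 = 𝒢.rng t.2}

variable (ra) in
/-- The diagonal action map. -/
def diagActFP (t : DD ra) : {p : X × X // ra.anchor p.1 = ra.anchor p.2} :=
  ⟨(ra.act t.1.1.1 t.1.2 t.2.2, ra.act t.1.1.2 t.1.2 (by rw [← t.2.1]; exact t.2.2)), by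
    rw [ra.anchor_act, ra.anchor_act]⟩

lemma diagActFP_val (t : DD ra) :
    (diagActFP ra t).1 = (gact ra t.1.1.1 t.1.2, gact ra t.1.1.2 t.1.2) := by
  have h2 : ra.anchor t.1.1.2 = 𝒢.rng t.1.2 := by rw [← t.2.1]; exact t.2.2
  exact Prod.ext (gact_eq t.2.2).symm (gact_eq h2).symm

lemma continuous_diagActFP : Continuous (diagActFP ra) := by
  apply Continuous.subtype_mk
  have hval : Continuous (fun t : DD ra => t.1) := continuous_subtype_val
  apply Continuous.prodMk
  · exact ra.continuous_act.comp (Continuous.subtype_mk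
      ((hval.fst.fst).prodMk hval.snd) (fun t => t.2.2))
  · exact ra.continuous_act.comp (Continuous.subtype_mk
      ((hval.fst.snd).prodMk hval.snd) (fun t => by rw [← t.2.1]; exact t.2.2))

variable (ra) in
/-- Saturation of a set under the diagonal action. -/
def satn (U : Set {p : X × X // ra.anchor p.1 = ra.anchor p.2}) :
    Set {p : X × X // ra.anchor p.1 = ra.anchor p.2} :=
  {z | ∃ t : DD ra, t.1.1 = z.1 ∧ diagActFP ra t ∈ U}

lemma preimage_image_mk (U : Set {p : X × X // ra.anchor p.1 = ra.anchor p.2}) :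
    Quot.mk ra.diagRel ⁻¹' (Quot.mk ra.diagRel '' U) = satn ra U := by
  ext z
  constructor
  · rintro ⟨u, hu, hequ⟩
    have hrel : ra.diagRel z u := (diagRel_equiv).symm (quot_mk_eq.mp hequ)
    obtain ⟨h, hc, he1, he2⟩ := diagRel_iff.mp hrel
    refine ⟨⟨(z.1, h), ⟨z.2, hc⟩⟩, rfl, ?_⟩
    have : diagActFP ra ⟨(z.1, h), ⟨z.2, hc⟩⟩ = u := by
      apply Subtype.ext
      rw [diagActFP_val]
      exact (Prod.ext he1 he2).symm
    rw [this]; exact hu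
  · rintro ⟨t, ht1, htU⟩
    refine ⟨diagActFP ra t, htU, ?_⟩
    apply (Quot.sound _).symm
    rw [diagRel_iff]
    refine ⟨t.1.2, by rw [← ht1]; exact t.2.2, ?_, ?_⟩
    · rw [diagActFP_val]; dsimp only; rw [ht1]
    · rw [diagActFP_val]; dsimp only; rw [ht1]

lemma isOpen_satn (hsrc : 𝒢.OpenSource)
    {U : Set {p : X × X // ra.anchor p.1 = ra.anchor p.2}} (hU : IsOpen U) :
    IsOpen (satn ra U) := by
  rw [isOpen_iff_forall_mem_open]
  rintro z ⟨t, ht1, htU⟩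
  -- get a basic open neighbourhood of `t` inside the preimage of `U`
  have hpre : IsOpen (diagActFP ra ⁻¹' U) := (continuous_diagActFP).isOpen_preimage U hU
  obtain ⟨O, hOopen, hOeq⟩ := isOpen_induced_iff.mp hpre
  have htO : t.1 ∈ O := by
    have : t ∈ diagActFP ra ⁻¹' U := htU
    rw [← hOeq] at this; exact this
  obtain ⟨A, B, hAopen, hBopen, hA, hB, hAB⟩ := isOpen_prod_iff.mp hOopen t.1.1 t.1.2 htO
  obtain ⟨A₁, A₂, hA₁, hA₂, hA11, hA12, hA₁₂⟩ := isOpen_prod_iff.mp hAopen t.1.1.1 t.1.1.2 hA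
  obtain ⟨V₂, hV₂, hV₂eq⟩ := hsrc (𝒢.inv '' B) (isOpenMap_ginv B hBopen)
  refine ⟨(fun w : {p : X × X // ra.anchor p.1 = ra.anchor p.2} => w.1.1) ⁻¹' A₁ ∩
      ((fun w : {p : X × X // ra.anchor p.1 = ra.anchor p.2} => w.1.2) ⁻¹' A₂ ∩
       (fun w : {p : X × X // ra.anchor p.1 = ra.anchor p.2} => ra.anchor w.1.1) ⁻¹' V₂),
    ?_, ?_, ?_⟩
  · -- contained in the saturation
    rintro w ⟨hw1, hw2, hw3⟩
    have hwu : ra.anchor w.1.1 ∈ 𝒢.src '' (𝒢.inv '' B) := by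
      rw [hV₂eq]; exact ⟨hw3, anchor_mem_units w.1.1⟩
    obtain ⟨g', ⟨g, hgB, rfl⟩, hg⟩ := hwu
    have hwrng : ra.anchor w.1.1 = 𝒢.rng g := by rw [← hg, 𝒢.src_inv]
    have hmemO : (w.1, g) ∈ O := hAB ⟨hA₁₂ ⟨hw1, hw2⟩, hgB⟩
    have : (⟨(w.1, g), ⟨w.2, hwrng⟩⟩ : DD ra) ∈ diagActFP ra ⁻¹' U := by
      rw [← hOeq]; exact hmemO
    exact ⟨⟨(w.1, g), ⟨w.2, hwrng⟩⟩, rfl, this⟩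
  · -- open
    have c1 : Continuous (fun w : {p : X × X // ra.anchor p.1 = ra.anchor p.2} => w.1.1) :=
      (continuous_subtype_val).fst
    have c2 : Continuous (fun w : {p : X × X // ra.anchor p.1 = ra.anchor p.2} => w.1.2) :=
      (continuous_subtype_val).snd
    exact IsOpen.inter (hA₁.preimage c1) (IsOpen.inter (hA₂.preimage c2)
      (hV₂.preimage (ra.continuous_anchor.comp c1)))
  · -- membership
    refine ⟨?_, ?_, ?_⟩
    · show z.1.1 ∈ A₁
      rw [← ht1]; exact hA11
    · show z.1.2 ∈ A₂
      rw [← ht1]; exact hA12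
    have hz1 : ra.anchor z.1.1 = 𝒢.rng t.1.2 := by rw [← ht1]; exact t.2.2
    show ra.anchor z.1.1 ∈ V₂
    rw [hz1]
    have hmem : 𝒢.rng t.1.2 ∈ 𝒢.src '' (𝒢.inv '' B) :=
      ⟨𝒢.inv t.1.2, ⟨t.1.2, hB, rfl⟩, 𝒢.src_inv t.1.2⟩
    rw [hV₂eq] at hmem
    exact hmem.1

variable (ra) in
lemma isOpenMap_mk (hsrc : 𝒢.OpenSource) : IsOpenMap (Quot.mk ra.diagRel) := by
  intro U hU
  rw [isOpen_coinduced, preimage_image_mk]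
  exact isOpen_satn hsrc hU

variable (ra) in
lemma isOpenQuotientMap_mk (hsrc : 𝒢.OpenSource) :
    IsOpenQuotientMap (Quot.mk ra.diagRel) :=
  ⟨Quot.mk_surjective, continuous_quot_mk, isOpenMap_mk ra hsrc⟩

end
end Imp
namespace Imp
open Topology Filter Set Classical
noncomputable section

variable {H X : Type*} [TopologicalSpace H] [TopologicalSpace X]
variable {𝒢 : TopGroupoid H} {ra : RightGroupoidAction 𝒢 X}

variable (ra) in
/-- The graph map of the action. -/
def actMap : {p : X × H // ra.anchor p.1 = 𝒢.rng p.2} → X × X :=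
  fun p => (p.1.1, ra.act p.1.1 p.1.2 p.2)

lemma actMap_eq (p : {p : X × H // ra.anchor p.1 = 𝒢.rng p.2}) :
    actMap ra p = (p.1.1, gact ra p.1.1 p.1.2) := by
  rw [actMap, gact_eq p.2]

lemma injective_actMap (hfree : ra.IsFree) : Function.Injective (actMap ra) := by
  intro p q hpq
  rw [actMap_eq, actMap_eq] at hpq
  have h1 : p.1.1 = q.1.1 := (Prod.ext_iff.mp hpq).1
  have h2 := (Prod.ext_iff.mp hpq).2
  rw [← h1] at h2
  have h3 : p.1.2 = q.1.2 := gact_injective hfree p.2 (h1 ▸ q.2) h2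
  exact Subtype.ext (Prod.ext h1 h3)

lemma isClosedEmbedding_actMap (hfree : ra.IsFree) (hproper : ra.IsProper) :
    IsClosedEmbedding (actMap ra) :=
  IsClosedEmbedding.of_continuous_injective_isClosedMap
    hproper.continuous (injective_actMap hfree) hproper.isClosedMap

/-- Continuity of the translation function on the orbit relation. -/
lemma continuous_tauPair (hfree : ra.IsFree) (hproper : ra.IsProper) :
    Continuous (fun r : {r : X × X // SameOrbit ra r.1 r.2} => tau ra r.1.1 r.1.2) := by
  have hemb := isClosedEmbedding_actMap hfree hproper
  have hg : Continuous (fun r : {r : X × X // SameOrbit ra r.1 r.2} =>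
      (⟨(r.1.1, tau ra r.1.1 r.1.2), tau_comp r.2⟩ :
        {p : X × H // ra.anchor p.1 = 𝒢.rng p.2})) := by
    rw [hemb.isInducing.continuous_iff]
    have : (actMap ra) ∘ (fun r : {r : X × X // SameOrbit ra r.1 r.2} =>
        (⟨(r.1.1, tau ra r.1.1 r.1.2), tau_comp r.2⟩ :
          {p : X × H // ra.anchor p.1 = 𝒢.rng p.2})) = Subtype.val := by
      funext r
      rw [Function.comp_apply, actMap_eq]
      exact Prod.ext rfl (tau_act r.2)
    rw [this]
    exact continuous_subtype_val
  exact (continuous_snd.comp continuous_subtype_val).comp hg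

variable (ra) in
/-- The graph map of the diagonal action. -/
def phiMap : DD ra → (X × X) × (X × X) := fun t => (t.1.1, (diagActFP ra t).1)

lemma continuous_phiMap : Continuous (phiMap ra) :=
  (continuous_subtype_val.fst).prodMk
    (continuous_subtype_val.comp continuous_diagActFP)

lemma isProperMap_phiMap [T2Space H] (hproper : ra.IsProper) :
    IsProperMap (phiMap ra) := by
  rw [isProperMap_iff_ultrafilter]
  refine ⟨continuous_phiMap, ?_⟩
  intro 𝒰 y hy
  obtain ⟨hcont, hult⟩ := isProperMap_iff_ultrafilter.mp hproper
  -- first coordinate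
  set m₁ : DD ra → {p : X × H // ra.anchor p.1 = 𝒢.rng p.2} :=
    fun t => ⟨(t.1.1.1, t.1.2), t.2.2⟩ with hm₁
  set m₂ : DD ra → {p : X × H // ra.anchor p.1 = 𝒢.rng p.2} :=
    fun t => ⟨(t.1.1.2, t.1.2), by rw [← t.2.1]; exact t.2.2⟩ with hm₂
  have hten1 : Tendsto (actMap ra ∘ m₁) 𝒰 (𝓝 (y.1.1, y.2.1)) := by
    have : actMap ra ∘ m₁ = (fun pp : (X × X) × (X × X) => (pp.1.1, pp.2.1)) ∘ phiMap ra :=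
      rfl
    rw [this]
    exact ((continuous_fst.fst.prodMk continuous_snd.fst).tendsto y).comp hy
  have hten2 : Tendsto (actMap ra ∘ m₂) 𝒰 (𝓝 (y.1.2, y.2.2)) := by
    have : actMap ra ∘ m₂ = (fun pp : (X × X) × (X × X) => (pp.1.2, pp.2.2)) ∘ phiMap ra :=
      rfl
    rw [this]
    exact ((continuous_fst.snd.prodMk continuous_snd.snd).tendsto y).comp hy
  obtain ⟨p₁, hfp₁, hle₁⟩ := hult (𝒰 := 𝒰.map m₁) (tendsto_map' hten1)
  obtain ⟨p₂, hfp₂, hle₂⟩ := hult (𝒰 := 𝒰.map m₂) (tendsto_map' hten2)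
  have hp11 : p₁.1.1 = y.1.1 := (Prod.ext_iff.mp hfp₁).1
  have hp21 : p₂.1.1 = y.1.2 := (Prod.ext_iff.mp hfp₂).1
  have hact1 : gact ra p₁.1.1 p₁.1.2 = y.2.1 := by
    rw [gact_eq p₁.2]; exact (Prod.ext_iff.mp hfp₁).2
  have hact2 : gact ra p₂.1.1 p₂.1.2 = y.2.2 := by
    rw [gact_eq p₂.2]; exact (Prod.ext_iff.mp hfp₂).2
  -- the two group elements agree
  have htend1 : Tendsto (fun t : DD ra => t.1.2) 𝒰 (𝓝 p₁.1.2) := by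
    have : Tendsto (Subtype.val) (𝒰.map m₁ : Filter _) (𝓝 p₁.1) :=
      (continuous_subtype_val.tendsto p₁).mono_left hle₁
    exact (continuous_snd.tendsto p₁.1).comp (tendsto_map'_iff.mp this)
  have htend2 : Tendsto (fun t : DD ra => t.1.2) 𝒰 (𝓝 p₂.1.2) := by
    have : Tendsto (Subtype.val) (𝒰.map m₂ : Filter _) (𝓝 p₂.1) :=
      (continuous_subtype_val.tendsto p₂).mono_left hle₂
    exact (continuous_snd.tendsto p₂.1).comp (tendsto_map'_iff.mp this)
  have hh : p₂.1.2 = p₁.1.2 := tendsto_nhds_unique htend2 htend1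
  -- limit point
  have cond2 : ra.anchor y.1.1 = 𝒢.rng p₁.1.2 := by rw [← hp11]; exact p₁.2
  have cond2' : ra.anchor y.1.2 = 𝒢.rng p₁.1.2 := by rw [← hp21, ← hh]; exact p₂.2
  have cond1 : ra.anchor y.1.1 = ra.anchor y.1.2 := cond2.trans cond2'.symm
  refine ⟨⟨(y.1, p₁.1.2), ⟨cond1, cond2⟩⟩, ?_, ?_⟩
  · -- phiMap of the limit point is y
    refine Prod.ext rfl ?_
    show (diagActFP ra ⟨(y.1, p₁.1.2), ⟨cond1, cond2⟩⟩).1 = y.2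
    rw [diagActFP_val]
    refine Prod.ext ?_ ?_
    · show gact ra y.1.1 p₁.1.2 = y.2.1
      rw [← hp11]; exact hact1
    · show gact ra y.1.2 p₁.1.2 = y.2.2
      rw [← hp21, ← hh]; exact hact2
  · -- the ultrafilter converges
    rw [nhds_subtype_eq_comap, ← Filter.map_le_iff_le_comap]
    have hfst : Tendsto (fun t : DD ra => t.1.1) 𝒰 (𝓝 y.1) :=
      (continuous_fst.tendsto y).comp hy
    exact hfst.prodMk_nhds htend1

variable (ra) in
lemma isClosed_rel [T2Space H] (hproper : ra.IsProper) :
    IsClosed {pp : {p : X × X // ra.anchor p.1 = ra.anchor p.2} ×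
        {p : X × X // ra.anchor p.1 = ra.anchor p.2} |
      Quot.mk ra.diagRel pp.1 = Quot.mk ra.diagRel pp.2} := by
  have hrange : IsClosed (Set.range (phiMap ra)) :=
    (isProperMap_phiMap hproper).isClosedMap.isClosed_range
  have heq : {pp : {p : X × X // ra.anchor p.1 = ra.anchor p.2} ×
        {p : X × X // ra.anchor p.1 = ra.anchor p.2} |
      Quot.mk ra.diagRel pp.1 = Quot.mk ra.diagRel pp.2} =
      (fun pp : {p : X × X // ra.anchor p.1 = ra.anchor p.2} ×
        {p : X × X // ra.anchor p.1 = ra.anchor p.2} => ((pp.1 : X × X), (pp.2 : X × X)))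
        ⁻¹' (Set.range (phiMap ra)) := by
    ext ⟨a, b⟩
    constructor
    · intro hab
      obtain ⟨h, hc, he1, he2⟩ := diagRel_iff.mp (quot_mk_eq.mp hab)
      refine ⟨⟨(a.1, h), ⟨a.2, hc⟩⟩, ?_⟩
      refine Prod.ext rfl ?_
      show (diagActFP ra _).1 = (b : X × X)
      rw [diagActFP_val]
      exact (Prod.ext he1 he2).symm
    · rintro ⟨t, ht⟩
      have h1 : t.1.1 = (a : X × X) := congrArg Prod.fst ht
      have h2 : (diagActFP ra t).1 = (b : X × X) := congrArg Prod.snd ht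
      rw [diagActFP_val] at h2
      apply quot_mk_eq.mpr
      rw [diagRel_iff]
      refine ⟨t.1.2, by rw [← h1]; exact t.2.2, ?_, ?_⟩
      · rw [← h2, ← h1]
      · rw [← h2, ← h1]
  rw [heq]
  exact hrange.preimage ((continuous_subtype_val.comp continuous_fst).prodMk
    (continuous_subtype_val.comp continuous_snd))

lemma t2Space_quot [T2Space H] (hsrc : 𝒢.OpenSource) (hproper : ra.IsProper) :
    T2Space (Quot ra.diagRel) := by
  constructor
  intro a b hab
  obtain ⟨p, rfl⟩ := exists_rep a
  obtain ⟨q, rfl⟩ := exists_rep b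
  have hmem : (p, q) ∈ {pp : {p : X × X // ra.anchor p.1 = ra.anchor p.2} ×
      {p : X × X // ra.anchor p.1 = ra.anchor p.2} |
      Quot.mk ra.diagRel pp.1 = Quot.mk ra.diagRel pp.2}ᶜ := hab
  obtain ⟨O₁, O₂, hO₁, hO₂, hp, hq, hsub⟩ :=
    isOpen_prod_iff.mp (isClosed_rel ra hproper).isOpen_compl p q hmem
  refine ⟨Quot.mk _ '' O₁, Quot.mk _ '' O₂, isOpenMap_mk ra hsrc O₁ hO₁,
    isOpenMap_mk ra hsrc O₂ hO₂, ⟨p, hp, rfl⟩, ⟨q, hq, rfl⟩, ?_⟩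
  rw [Set.disjoint_left]
  rintro c ⟨u, hu, rfl⟩ ⟨v, hv, hvu⟩
  have hcompl : (u, v) ∈ {pp : {p : X × X // ra.anchor p.1 = ra.anchor p.2} ×
      {p : X × X // ra.anchor p.1 = ra.anchor p.2} |
      Quot.mk ra.diagRel pp.1 = Quot.mk ra.diagRel pp.2}ᶜ := hsub ⟨hu, hv⟩
  exact hcompl hvu.symm

lemma locallyCompactSpace_FP [T2Space H] [LocallyCompactSpace X] :
    LocallyCompactSpace {p : X × X // ra.anchor p.1 = ra.anchor p.2} := by
  have hclosed : IsClosed {p : X × X | ra.anchor p.1 = ra.anchor p.2} :=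
    isClosed_eq (ra.continuous_anchor.comp continuous_fst)
      (ra.continuous_anchor.comp continuous_snd)
  exact hclosed.locallyCompactSpace

lemma locallyCompactSpace_quot [T2Space H] [LocallyCompactSpace X]
    (hsrc : 𝒢.OpenSource) : LocallyCompactSpace (Quot ra.diagRel) := by
  have := locallyCompactSpace_FP (ra := ra)
  exact (isOpenQuotientMap_mk ra hsrc).locallyCompactSpace

end
end Imp
namespace Imp
open Topology Filter Set Classical
noncomputable section

variable {H X : Type*} [TopologicalSpace H] [TopologicalSpace X]

lemma isOpenQuotientMap_restrictPreimage {α β : Type*} [TopologicalSpace α]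
    [TopologicalSpace β] {f : α → β} (hf : IsOpenQuotientMap f) (s : Set β) :
    IsOpenQuotientMap (s.restrictPreimage f) := by
  refine ⟨hf.surjective.restrictPreimage s, hf.continuous.restrictPreimage, ?_⟩
  intro U hU
  obtain ⟨O, hO, rfl⟩ := isOpen_induced_iff.mp hU
  have himg : s.restrictPreimage f '' (Subtype.val ⁻¹' O) = Subtype.val ⁻¹' (f '' O) := by
    ext c
    constructor
    · rintro ⟨a, ha, rfl⟩
      exact ⟨a.1, ha, rfl⟩
    · rintro ⟨w, hw, hwc⟩
      have hws : w ∈ f ⁻¹' s := by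
        show f w ∈ s
        rw [hwc]; exact c.2
      exact ⟨⟨w, hws⟩, hw, Subtype.ext hwc⟩
  rw [himg]
  exact (hf.isOpenMap O hO).preimage continuous_subtype_val

variable {𝒢 : TopGroupoid H} {ra : RightGroupoidAction 𝒢 X}

lemma continuous_GSrc : Continuous (GSrc ra) := by
  apply continuous_quot_lift
  have h : Continuous (fun p : {p : X × X // ra.anchor p.1 = ra.anchor p.2} =>
      (⟨(p.1.2, p.1.2), rfl⟩ : {p : X × X // ra.anchor p.1 = ra.anchor p.2})) :=
    by
    apply Continuous.subtype_mk
    exact continuous_subtype_val.snd.prodMk continuous_subtype_val.snd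
  exact continuous_quot_mk.comp h

lemma continuous_GRng : Continuous (GRng ra) := by
  apply continuous_quot_lift
  have h : Continuous (fun p : {p : X × X // ra.anchor p.1 = ra.anchor p.2} =>
      (⟨(p.1.1, p.1.1), rfl⟩ : {p : X × X // ra.anchor p.1 = ra.anchor p.2})) :=
    by
    apply Continuous.subtype_mk
    exact continuous_subtype_val.fst.prodMk continuous_subtype_val.fst
  exact continuous_quot_mk.comp h

lemma continuous_GInv : Continuous (GInv ra) := by
  apply continuous_quot_lift
  have h : Continuous (fun p : {p : X × X // ra.anchor p.1 = ra.anchor p.2} =>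
      (⟨(p.1.2, p.1.1), p.2.symm⟩ : {p : X × X // ra.anchor p.1 = ra.anchor p.2})) :=
    by
    apply Continuous.subtype_mk
    exact continuous_subtype_val.snd.prodMk continuous_subtype_val.fst
  exact continuous_quot_mk.comp h

/-- Continuity of `s ↦ a s · τ(b s, c s)`. -/
lemma continuous_gact_tau {α : Type*} [TopologicalSpace α]
    (hfree : ra.IsFree) (hproper : ra.IsProper) {a b c : α → X}
    (ha : Continuous a) (hb : Continuous b) (hc : Continuous c)
    (hab : ∀ s, ra.anchor (a s) = ra.anchor (b s))
    (horb : ∀ s, SameOrbit ra (b s) (c s)) :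
    Continuous (fun s => gact ra (a s) (tau ra (b s) (c s))) := by
  have ht : Continuous (fun s => tau ra (b s) (c s)) :=
    (continuous_tauPair hfree hproper).comp
      (Continuous.subtype_mk (hb.prodMk hc) horb)
  have hcnd : ∀ s, ra.anchor (a s) = 𝒢.rng (tau ra (b s) (c s)) := fun s => by
    rw [hab s]; exact tau_comp (horb s)
  have heq : (fun s => gact ra (a s) (tau ra (b s) (c s))) =
      (fun p : {p : X × H // ra.anchor p.1 = 𝒢.rng p.2} => ra.act p.1.1 p.1.2 p.2) ∘
      (fun s => ⟨(a s, tau ra (b s) (c s)), hcnd s⟩) := funext fun s => gact_eq (hcnd s)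
  rw [heq]
  exact ra.continuous_act.comp (Continuous.subtype_mk (ha.prodMk ht) hcnd)

lemma continuous_GMul (hfree : ra.IsFree) (hproper : ra.IsProper) (hsrc : 𝒢.OpenSource) :
    Continuous (fun pp : {p : Quot ra.diagRel × Quot ra.diagRel //
        GSrc ra p.1 = GRng ra p.2} => GMul ra pp.1.1 pp.1.2) := by
  set S : Set (Quot ra.diagRel × Quot ra.diagRel) :=
    {p | GSrc ra p.1 = GRng ra p.2} with hS
  set f : ({p : X × X // ra.anchor p.1 = ra.anchor p.2} ×
      {p : X × X // ra.anchor p.1 = ra.anchor p.2}) →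
      Quot ra.diagRel × Quot ra.diagRel :=
    Prod.map (Quot.mk ra.diagRel) (Quot.mk ra.diagRel) with hf
  have hqm : IsOpenQuotientMap f :=
    ⟨(Quot.mk_surjective).prodMap Quot.mk_surjective,
      continuous_quot_mk.prodMap continuous_quot_mk,
      (isOpenMap_mk ra hsrc).prodMap (isOpenMap_mk ra hsrc)⟩
  have hq := (isOpenQuotientMap_restrictPreimage hqm S).isQuotientMap
  show Continuous fun pp : S => GMul ra pp.1.1 pp.1.2
  rw [hq.continuous_iff]
  have horb : ∀ t : f ⁻¹' S, SameOrbit ra t.1.1.1.2 t.1.2.1.1 :=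
    fun t => sameOrbit_of_srcrng t.2
  have key : ((fun pp : S => GMul ra pp.1.1 pp.1.2) ∘ S.restrictPreimage f) =
      fun t : f ⁻¹' S => Quot.mk ra.diagRel
        ⟨(gact ra t.1.1.1.1 (tau ra t.1.1.1.2 t.1.2.1.1), t.1.2.1.2),
          anchor_pair (sameOrbit_of_srcrng t.2)⟩ := by
    funext t
    exact GMul_eval hfree t.1.1 t.1.2 t.2
  rw [key]
  apply continuous_quot_mk.comp
  apply Continuous.subtype_mk
  apply Continuous.prodMk
  · refine continuous_gact_tau hfree hproper ?_ ?_ ?_ (fun t => t.1.1.2) horb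
    · exact (continuous_subtype_val.comp continuous_subtype_val.fst).fst
    · exact (continuous_subtype_val.comp continuous_subtype_val.fst).snd
    · exact (continuous_subtype_val.comp continuous_subtype_val.snd).fst
  · exact (continuous_subtype_val.comp continuous_subtype_val.snd).snd

lemma continuous_LAct (hfree : ra.IsFree) (hproper : ra.IsProper) (hsrc : 𝒢.OpenSource) :
    Continuous (fun t : {p : Quot ra.diagRel × X //
        GSrc ra p.1 = Quot.mk ra.diagRel ⟨(p.2, p.2), rfl⟩} => LAct ra t.1.1 t.1.2) := by
  set S : Set (Quot ra.diagRel × X) :=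
    {p | GSrc ra p.1 = Quot.mk ra.diagRel ⟨(p.2, p.2), rfl⟩} with hS
  set f : ({p : X × X // ra.anchor p.1 = ra.anchor p.2} × X) → Quot ra.diagRel × X :=
    Prod.map (Quot.mk ra.diagRel) id with hf
  have hqm : IsOpenQuotientMap f :=
    ⟨(Quot.mk_surjective).prodMap Function.surjective_id,
      continuous_quot_mk.prodMap continuous_id,
      (isOpenMap_mk ra hsrc).prodMap IsOpenMap.id⟩
  have hq := (isOpenQuotientMap_restrictPreimage hqm S).isQuotientMap
  show Continuous fun t : S => LAct ra t.1.1 t.1.2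
  rw [hq.continuous_iff]
  have horb : ∀ t : f ⁻¹' S, SameOrbit ra t.1.1.1.2 t.1.2 :=
    fun t => sameOrbit_of_anchor t.2 t.1.1 rfl
  have key : ((fun t : S => LAct ra t.1.1 t.1.2) ∘ S.restrictPreimage f) =
      fun t : f ⁻¹' S => gact ra t.1.1.1.1 (tau ra t.1.1.1.2 t.1.2) := by
    funext t
    exact LAct_eval hfree t.1.1 t.1.2 (horb t)
  rw [key]
  refine continuous_gact_tau hfree hproper ?_ ?_ ?_ (fun t => t.1.1.2) horb
  · exact (continuous_subtype_val.comp continuous_subtype_val.fst).fst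
  · exact (continuous_subtype_val.comp continuous_subtype_val.fst).snd
  · exact continuous_subtype_val.snd

end
end Imp
namespace Imp
open Topology Filter Set Classical
noncomputable section

variable {H X : Type*} [TopologicalSpace H] [TopologicalSpace X]
variable {𝒢 : TopGroupoid H} {ra : RightGroupoidAction 𝒢 X}

lemma openSource_G (hsrc : 𝒢.OpenSource) (hopen : ra.OpenAnchor) :
    ∀ U : Set (Quot ra.diagRel), IsOpen U →
      ∃ V, IsOpen V ∧ GSrc ra '' U = V ∩ Set.range (GRng ra) := by
  intro U hU
  set W : Set {p : X × X // ra.anchor p.1 = ra.anchor p.2} :=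
    Quot.mk ra.diagRel ⁻¹' U with hW
  have hWopen : IsOpen W := hU.preimage continuous_quot_mk
  set Vt : Set {p : X × X // ra.anchor p.1 = ra.anchor p.2} :=
    {z | ∃ (x : X) (hx : ra.anchor x = ra.anchor z.1.2), (⟨(x, z.1.2), hx⟩ :
      {p : X × X // ra.anchor p.1 = ra.anchor p.2}) ∈ W} with hVt
  have hVtopen : IsOpen Vt := by
    rw [isOpen_iff_forall_mem_open]
    rintro z ⟨x, hx, hWmem⟩
    obtain ⟨O, hOopen, hOeq⟩ := isOpen_induced_iff.mp hWopen
    have hin : ((x, z.1.2) : X × X) ∈ O := by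
      have : (⟨(x, z.1.2), hx⟩ : {p : X × X // ra.anchor p.1 = ra.anchor p.2}) ∈
          Subtype.val ⁻¹' O := by rw [hOeq]; exact hWmem
      exact this
    obtain ⟨O₁, O₂, hO₁, hO₂, hxO₁, hzO₂, hO₁₂⟩ := isOpen_prod_iff.mp hOopen x z.1.2 hin
    obtain ⟨V₁, hV₁, hV₁eq⟩ := hopen O₁ hO₁
    refine ⟨(fun w : {p : X × X // ra.anchor p.1 = ra.anchor p.2} => w.1.2) ⁻¹' O₂ ∩
        (fun w : {p : X × X // ra.anchor p.1 = ra.anchor p.2} => ra.anchor w.1.2) ⁻¹' V₁,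
      ?_, ?_, ?_⟩
    · rintro w ⟨hw2, hwV⟩
      have : ra.anchor w.1.2 ∈ ra.anchor '' O₁ := by
        rw [hV₁eq]; exact ⟨hwV, anchor_mem_units w.1.2⟩
      obtain ⟨x', hx'O₁, hx'⟩ := this
      have hmem : (⟨(x', w.1.2), hx'⟩ :
          {p : X × X // ra.anchor p.1 = ra.anchor p.2}) ∈ W := by
        rw [← hOeq]
        exact hO₁₂ ⟨hx'O₁, hw2⟩
      exact ⟨x', hx', hmem⟩
    · exact IsOpen.inter (hO₂.preimage continuous_subtype_val.snd)
        (hV₁.preimage (ra.continuous_anchor.comp continuous_subtype_val.snd))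
    · refine ⟨hzO₂, ?_⟩
      show ra.anchor z.1.2 ∈ V₁
      have : ra.anchor z.1.2 ∈ ra.anchor '' O₁ := ⟨x, hxO₁, hx⟩
      rw [hV₁eq] at this
      exact this.1
  refine ⟨Quot.mk ra.diagRel '' Vt, isOpenMap_mk ra hsrc Vt hVtopen, ?_⟩
  ext c
  constructor
  · rintro ⟨d, hdU, rfl⟩
    obtain ⟨p, rfl⟩ := exists_rep d
    have hpW : p ∈ W := hdU
    constructor
    · refine ⟨⟨(p.1.2, p.1.2), rfl⟩, ⟨p.1.1, p.2, ?_⟩, rfl⟩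
      show (⟨(p.1.1, p.1.2), p.2⟩ : {p : X × X // ra.anchor p.1 = ra.anchor p.2}) ∈ W
      have : (⟨(p.1.1, p.1.2), p.2⟩ : {p : X × X // ra.anchor p.1 = ra.anchor p.2}) = p :=
        Subtype.ext rfl
      rw [this]; exact hpW
    · exact ⟨Quot.mk _ ⟨(p.1.2, p.1.2), rfl⟩, rfl⟩
  · rintro ⟨⟨z, ⟨x, hx, hWmem⟩, rfl⟩, hunit⟩
    have hdiag : z.1.1 = z.1.2 := by
      obtain ⟨e, he⟩ := mem_units_iff.mp hunit
      exact diag_of_eq_diag he.symm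
    refine ⟨Quot.mk _ ⟨(x, z.1.2), hx⟩, hWmem, ?_⟩
    rw [GSrc_mk]
    exact congrArg _ (Subtype.ext (Prod.ext hdiag.symm rfl))

lemma lanchor_open (hsrc : 𝒢.OpenSource) :
    ∀ U : Set X, IsOpen U →
      ∃ V, IsOpen V ∧ (fun x => Quot.mk ra.diagRel ⟨(x, x), rfl⟩) '' U =
        V ∩ Set.range (GRng ra) := by
  intro U hU
  set Vt : Set {p : X × X // ra.anchor p.1 = ra.anchor p.2} :=
    {z | z.1.1 ∈ U ∧ z.1.2 ∈ U} with hVt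
  have hVtopen : IsOpen Vt :=
    IsOpen.inter (hU.preimage continuous_subtype_val.fst)
      (hU.preimage continuous_subtype_val.snd)
  refine ⟨Quot.mk ra.diagRel '' Vt, isOpenMap_mk ra hsrc Vt hVtopen, ?_⟩
  ext c
  constructor
  · rintro ⟨x, hxU, rfl⟩
    exact ⟨⟨⟨(x, x), rfl⟩, ⟨hxU, hxU⟩, rfl⟩, ⟨Quot.mk _ ⟨(x, x), rfl⟩, rfl⟩⟩
  · rintro ⟨⟨z, ⟨hz1, hz2⟩, rfl⟩, hunit⟩
    have hdiag : z.1.1 = z.1.2 := by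
      obtain ⟨e, he⟩ := mem_units_iff.mp hunit
      exact diag_of_eq_diag he.symm
    refine ⟨z.1.1, hz1, ?_⟩
    exact congrArg _ (Subtype.ext (Prod.ext rfl hdiag))

lemma anchor_LAct (hfree : ra.IsFree) {c : Quot ra.diagRel} {x : X}
    (hc : GSrc ra c = Quot.mk ra.diagRel ⟨(x, x), rfl⟩) :
    ra.anchor (LAct ra c x) = ra.anchor x := by
  obtain ⟨a, ha, rfl⟩ := exists_rep_src hc
  rw [LAct_spec hfree a x ha]; exact ha

lemma isProperMap_LActMap (hfree : ra.IsFree) (hproper : ra.IsProper)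
    (hsrc : 𝒢.OpenSource) [T2Space H] :
    IsProperMap (fun t : {p : Quot ra.diagRel × X //
        GSrc ra p.1 = Quot.mk ra.diagRel ⟨(p.2, p.2), rfl⟩} =>
      ((LAct ra t.1.1 t.1.2, t.1.2) : X × X)) := by
  set DL := {p : Quot ra.diagRel × X //
    GSrc ra p.1 = Quot.mk ra.diagRel ⟨(p.2, p.2), rfl⟩} with hDL
  set ψ : DL → {p : X × X // ra.anchor p.1 = ra.anchor p.2} :=
    fun t => ⟨(LAct ra t.1.1 t.1.2, t.1.2), anchor_LAct hfree t.2⟩ with hψ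
  set φ : {p : X × X // ra.anchor p.1 = ra.anchor p.2} → DL :=
    fun p => ⟨(Quot.mk ra.diagRel p, p.1.2), rfl⟩ with hφ
  have left_inv : ∀ t, φ (ψ t) = t := by
    intro t
    obtain ⟨a, ha, hrep⟩ := exists_rep_src t.2
    have h1 : LAct ra t.1.1 t.1.2 = a := by
      rw [hrep]; exact LAct_spec hfree a t.1.2 ha
    refine Subtype.ext (Prod.ext_iff.mpr ⟨?_, rfl⟩)
    show Quot.mk ra.diagRel (ψ t) = t.1.1
    have hsub : ψ t = ⟨(a, t.1.2), ha⟩ := Subtype.ext (Prod.ext h1 rfl)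
    rw [hsub]
    exact hrep.symm
  have right_inv : ∀ p, ψ (φ p) = p := by
    intro p
    refine Subtype.ext (Prod.ext_iff.mpr ⟨?_, rfl⟩)
    show LAct ra (Quot.mk ra.diagRel p) p.1.2 = p.1.1
    exact LAct_spec hfree p.1.1 p.1.2 p.2
  have hcψ : Continuous ψ := by
    apply Continuous.subtype_mk
    exact (continuous_LAct hfree hproper hsrc).prodMk continuous_subtype_val.snd
  have hcφ : Continuous φ := by
    apply Continuous.subtype_mk
    exact (continuous_quot_mk.comp continuous_id).prodMk continuous_subtype_val.snd
  have hclosed : IsClosed {p : X × X | ra.anchor p.1 = ra.anchor p.2} :=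
    isClosed_eq (ra.continuous_anchor.comp continuous_fst)
      (ra.continuous_anchor.comp continuous_snd)
  have hψproper : IsProperMap ψ :=
    (Homeomorph.isClosedEmbedding ⟨⟨ψ, φ, left_inv, right_inv⟩, hcψ, hcφ⟩).isProperMap
  have hcomp : IsProperMap (Subtype.val ∘ ψ) :=
    IsProperMap.comp hclosed.isProperMap_subtypeVal hψproper
  have hfun : (Subtype.val ∘ ψ) =
      fun t : DL => ((LAct ra t.1.1 t.1.2, t.1.2) : X × X) := rfl
  rw [← hfun]
  exact hcomp

end
end Imp
namespace Imp
open Topology Filter Set Classical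
noncomputable section

variable {H X : Type*} [TopologicalSpace H] [TopologicalSpace X]
variable {𝒢 : TopGroupoid H} {ra : RightGroupoidAction 𝒢 X}

/-- The imprimitivity groupoid. -/
def GGg (hfree : ra.IsFree) (hproper : ra.IsProper) (hsrc : 𝒢.OpenSource) :
    TopGroupoid (Quot ra.diagRel) where
  src := GSrc ra
  rng := GRng ra
  mul := fun g h _ => GMul ra g h
  inv := GInv ra
  rng_src := by
    intro g
    obtain ⟨p, rfl⟩ := exists_rep g
    rfl
  src_src := by
    intro g
    obtain ⟨p, rfl⟩ := exists_rep g
    rfl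
  src_rng := by
    intro g
    obtain ⟨p, rfl⟩ := exists_rep g
    rfl
  rng_rng := by
    intro g
    obtain ⟨p, rfl⟩ := exists_rep g
    rfl
  src_mul := by
    intro g h hgh
    obtain ⟨x, y, z, hxy, hyz, rfl, rfl⟩ := exists_rep_aligned hgh
    show GSrc ra (GMul ra (Quot.mk ra.diagRel ⟨(x, y), hxy⟩)
      (Quot.mk ra.diagRel ⟨(y, z), hyz⟩)) = _
    rw [GMul_spec hfree x y z hxy hyz hgh]
    rfl
  rng_mul := by
    intro g h hgh
    obtain ⟨x, y, z, hxy, hyz, rfl, rfl⟩ := exists_rep_aligned hgh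
    show GRng ra (GMul ra (Quot.mk ra.diagRel ⟨(x, y), hxy⟩)
      (Quot.mk ra.diagRel ⟨(y, z), hyz⟩)) = _
    rw [GMul_spec hfree x y z hxy hyz hgh]
    rfl
  mul_assoc := by
    intro g h k hgh hhk h₁ h₂
    obtain ⟨y, z, w, hyz, hzw, rfl, rfl⟩ := exists_rep_aligned hhk
    obtain ⟨x, hxy, rfl⟩ := exists_rep_src (hgh.trans (GRng_mk _))
    show GMul ra (GMul ra (Quot.mk ra.diagRel ⟨(x, y), hxy⟩)
        (Quot.mk ra.diagRel ⟨(y, z), hyz⟩)) (Quot.mk ra.diagRel ⟨(z, w), hzw⟩) =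
      GMul ra (Quot.mk ra.diagRel ⟨(x, y), hxy⟩)
        (GMul ra (Quot.mk ra.diagRel ⟨(y, z), hyz⟩) (Quot.mk ra.diagRel ⟨(z, w), hzw⟩))
    rw [GMul_spec hfree x y z hxy hyz rfl, GMul_spec hfree y z w hyz hzw rfl,
      GMul_spec hfree x z w (hxy.trans hyz) hzw rfl,
      GMul_spec hfree x y w hxy (hyz.trans hzw) rfl]
  src_inv := by
    intro g
    obtain ⟨p, rfl⟩ := exists_rep g
    rfl
  rng_inv := by
    intro g
    obtain ⟨p, rfl⟩ := exists_rep g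
    rfl
  mul_inv := by
    intro g hcm
    obtain ⟨⟨⟨a, b⟩, hab⟩, rfl⟩ := exists_rep g
    show GMul ra (Quot.mk _ ⟨(a, b), hab⟩) (Quot.mk _ ⟨(b, a), hab.symm⟩) =
      Quot.mk _ ⟨(a, a), rfl⟩
    rw [GMul_spec hfree a b a hab hab.symm rfl]
  inv_mul := by
    intro g hcm
    obtain ⟨⟨⟨a, b⟩, hab⟩, rfl⟩ := exists_rep g
    show GMul ra (Quot.mk _ ⟨(b, a), hab.symm⟩) (Quot.mk _ ⟨(a, b), hab⟩) =
      Quot.mk _ ⟨(b, b), rfl⟩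
    rw [GMul_spec hfree b a b hab.symm hab rfl]
  mul_src := by
    intro g hcm
    obtain ⟨⟨⟨a, b⟩, hab⟩, rfl⟩ := exists_rep g
    show GMul ra (Quot.mk _ ⟨(a, b), hab⟩) (Quot.mk _ ⟨(b, b), rfl⟩) =
      Quot.mk _ ⟨(a, b), hab⟩
    rw [GMul_spec hfree a b b hab rfl rfl]
  rng_mul' := by
    intro g hcm
    obtain ⟨⟨⟨a, b⟩, hab⟩, rfl⟩ := exists_rep g
    show GMul ra (Quot.mk _ ⟨(a, a), rfl⟩) (Quot.mk _ ⟨(a, b), hab⟩) =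
      Quot.mk _ ⟨(a, b), hab⟩
    rw [GMul_spec hfree a a b rfl hab rfl]
  continuous_src := continuous_GSrc
  continuous_rng := continuous_GRng
  continuous_inv := continuous_GInv
  continuous_mul := continuous_GMul hfree hproper hsrc

/-- The left action of the imprimitivity groupoid on `X`. -/
def Lg (hfree : ra.IsFree) (hproper : ra.IsProper) (hsrc : 𝒢.OpenSource) :
    LeftGroupoidAction (GGg hfree hproper hsrc) X where
  anchor := fun x => Quot.mk ra.diagRel ⟨(x, x), rfl⟩
  anchor_unit := fun _ => rfl
  continuous_anchor := by
    apply Continuous.comp continuous_quot_mk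
    apply Continuous.subtype_mk
    exact continuous_id.prodMk continuous_id
  act := fun g x _ => LAct ra g x
  anchor_act := by
    intro g x hc
    obtain ⟨a, ha, rfl⟩ := exists_rep_src hc
    show Quot.mk ra.diagRel ⟨(LAct ra (Quot.mk ra.diagRel ⟨(a, x), ha⟩) x,
      LAct ra (Quot.mk ra.diagRel ⟨(a, x), ha⟩) x), rfl⟩ = _
    rw [LAct_spec hfree a x ha]
    rfl
  act_unit := fun x _ => LAct_spec hfree x x rfl
  act_mul := by
    intro g g' x hc hc' hgg hc''
    obtain ⟨a, ha, rfl⟩ := exists_rep_src hc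
    have e : LAct ra (Quot.mk ra.diagRel ⟨(a, x), ha⟩) x = a := LAct_spec hfree a x ha
    have hc'2 : GSrc ra g = Quot.mk ra.diagRel ⟨(a, a), rfl⟩ := by
      have h := hc'
      show GSrc ra g = _
      rw [← e]
      exact h
    obtain ⟨b, hb, rfl⟩ := exists_rep_src hc'2
    show LAct ra (Quot.mk ra.diagRel ⟨(b, a), hb⟩)
        (LAct ra (Quot.mk ra.diagRel ⟨(a, x), ha⟩) x) =
      LAct ra (GMul ra (Quot.mk ra.diagRel ⟨(b, a), hb⟩)
        (Quot.mk ra.diagRel ⟨(a, x), ha⟩)) x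
    rw [e, GMul_spec hfree b a x hb ha rfl, LAct_spec hfree b a hb,
      LAct_spec hfree b x (hb.trans ha)]
  continuous_act := continuous_LAct hfree hproper hsrc

/-- The groupoid equivalence. -/
def Eqvg [T2Space H] (hfree : ra.IsFree) (hproper : ra.IsProper) (hsrc : 𝒢.OpenSource)
    (hopen : ra.OpenAnchor) (hsurj : ra.SurjAnchor) :
    GroupoidEquivalence (GGg hfree hproper hsrc) 𝒢 X where
  lact := Lg hfree hproper hsrc
  ract := ra
  commute := by
    intro g x h hcl hcr hcr' hcl'
    obtain ⟨a, ha, rfl⟩ := exists_rep_src hcl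
    have hLa : LAct ra (Quot.mk ra.diagRel ⟨(a, x), ha⟩) x = a := LAct_spec hfree a x ha
    have hcrA : ra.anchor a = 𝒢.rng h := by rw [← hLa]; exact hcr'
    have hcond : ra.anchor (gact ra a h) = ra.anchor (gact ra x h) := by
      rw [anchor_gact hcrA, anchor_gact hcr]
    have hrel : Quot.mk ra.diagRel ⟨(a, x), ha⟩ =
        Quot.mk ra.diagRel ⟨(gact ra a h, gact ra x h), hcond⟩ :=
      Quot.sound (diagRel_iff.mpr ⟨h, hcrA, rfl, rfl⟩)
    have hcr'' : ra.anchor (LAct ra (Quot.mk ra.diagRel ⟨(a, x), ha⟩) x) = 𝒢.rng h := hcr'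
    have lhs : ra.act (LAct ra (Quot.mk ra.diagRel ⟨(a, x), ha⟩) x) h hcr' =
        gact ra a h :=
      calc ra.act (LAct ra (Quot.mk ra.diagRel ⟨(a, x), ha⟩) x) h hcr'
          = gact ra (LAct ra (Quot.mk ra.diagRel ⟨(a, x), ha⟩) x) h := (gact_eq hcr'').symm
        _ = gact ra a h := by rw [hLa]
    have hxh : ra.act x h hcr = gact ra x h := (gact_eq hcr).symm
    show ra.act (LAct ra (Quot.mk ra.diagRel ⟨(a, x), ha⟩) x) h hcr' =
      LAct ra (Quot.mk ra.diagRel ⟨(a, x), ha⟩) (ra.act x h hcr)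
    rw [lhs, hxh, hrel, LAct_spec hfree (gact ra a h) (gact ra x h) hcond]
  lact_principal := by
    constructor
    · intro g x hc he
      obtain ⟨a, ha, rfl⟩ := exists_rep_src hc
      have hax : a = x := by
        rw [← LAct_spec hfree a x ha]
        exact he
      subst hax
      rfl
    · exact isProperMap_LActMap hfree hproper hsrc
  ract_principal := ⟨hfree, hproper⟩
  lact_openAnchor := lanchor_open hsrc
  ract_openAnchor := hopen
  lact_surjAnchor := by
    intro u hu
    obtain ⟨e, he⟩ := mem_units_iff.mp hu
    exact ⟨e, he.symm⟩
  ract_surjAnchor := hsurj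
  ract_anchor_lact := fun g x hc => anchor_LAct hfree hc
  ract_anchor_eq_iff := by
    intro x y
    constructor
    · intro hxy
      exact ⟨Quot.mk ra.diagRel ⟨(x, y), hxy⟩, rfl, LAct_spec hfree x y hxy⟩
    · rintro ⟨g, hc, rfl⟩
      exact anchor_LAct hfree hc
  lact_anchor_ract := by
    intro x h hc
    exact (Quot.sound (diagRel_iff.mpr ⟨h, hc, (gact_eq hc).symm, (gact_eq hc).symm⟩)).symm
  lact_anchor_eq_iff := by
    intro x y
    constructor
    · intro hxy
      have hrel := diagRel_equiv.symm (quot_mk_eq.mp hxy)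
      obtain ⟨k, hck, he1, he2⟩ := diagRel_iff.mp hrel
      dsimp only at hck he1 he2
      refine ⟨k, hck, ?_⟩
      rw [← gact_eq hck]
      exact he1.symm
    · rintro ⟨h, hc, rfl⟩
      exact (Quot.sound (diagRel_iff.mpr
        ⟨h, hc, (gact_eq hc).symm, (gact_eq hc).symm⟩)).symm

end
end Imp

/-- **Lemma (motivation)** (`lem:thm for gpds`, Williams): the imprimitivity groupoid of a
principal `H`-space. -/
theorem imprimitivity_groupoid_exists
    {H X : Type*} [TopologicalSpace H] [TopologicalSpace X]
    [LocallyCompactSpace H] [T2Space H] [LocallyCompactSpace X] [T2Space X]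
    (𝒢 : TopGroupoid H) (hsrc : 𝒢.OpenSource)
    (ra : RightGroupoidAction 𝒢 X)
    (hprin : ra.IsPrincipal) (hopen : ra.OpenAnchor) (hsurj : ra.SurjAnchor) :
    ∃ GG : TopGroupoid (Quot ra.diagRel),
      -- the groupoid structure is the announced one on representatives
      (∀ p : {p : X × X // ra.anchor p.1 = ra.anchor p.2},
        GG.src (Quot.mk _ p) = Quot.mk _ ⟨(p.1.2, p.1.2), rfl⟩) ∧
      (∀ p : {p : X × X // ra.anchor p.1 = ra.anchor p.2},
        GG.rng (Quot.mk _ p) = Quot.mk _ ⟨(p.1.1, p.1.1), rfl⟩) ∧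
      (∀ (x y z : X) (hxy : ra.anchor x = ra.anchor y) (hyz : ra.anchor y = ra.anchor z)
        (hc : GG.src (Quot.mk _ ⟨(x, y), hxy⟩) = GG.rng (Quot.mk _ ⟨(y, z), hyz⟩)),
        GG.mul (Quot.mk _ ⟨(x, y), hxy⟩) (Quot.mk _ ⟨(y, z), hyz⟩) hc =
          Quot.mk _ ⟨(x, z), hxy.trans hyz⟩) ∧
      (∀ (x y : X) (hxy : ra.anchor x = ra.anchor y),
        GG.inv (Quot.mk _ ⟨(x, y), hxy⟩) = Quot.mk _ ⟨(y, x), hxy.symm⟩) ∧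
      -- G is a locally compact Hausdorff groupoid with open source map
      LocallyCompactSpace (Quot ra.diagRel) ∧ T2Space (Quot ra.diagRel) ∧
      GG.OpenSource ∧
      -- G acts freely and properly on the left of X via [x, y^op]·y = x,
      -- with anchor x ↦ [x, x^op]
      ∃ L : LeftGroupoidAction GG X,
        (∀ x : X, L.anchor x = Quot.mk _ ⟨(x, x), rfl⟩) ∧
        (∀ (x y : X) (hxy : ra.anchor x = ra.anchor y)
          (hc : GG.src (Quot.mk _ ⟨(x, y), hxy⟩) = L.anchor y),
          L.act (Quot.mk _ ⟨(x, y), hxy⟩) y hc = x) ∧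
        L.IsPrincipal ∧
        -- and with this structure X is a (G, H)-equivalence
        ∃ Eqv : GroupoidEquivalence GG 𝒢 X, Eqv.lact = L ∧ Eqv.ract = ra := by
  obtain ⟨hfree, hproper⟩ := hprin
  exact ⟨Imp.GGg hfree hproper hsrc, fun p => rfl, fun p => rfl,
    fun x y z hxy hyz hc => Imp.GMul_spec hfree x y z hxy hyz hc,
    fun x y hxy => rfl,
    Imp.locallyCompactSpace_quot hsrc,
    Imp.t2Space_quot hsrc hproper,
    Imp.openSource_G hsrc hopen,
    Imp.Lg hfree hproper hsrc,
    fun x => rfl,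
    fun x y hxy hc => Imp.LAct_spec hfree x y hxy,
    (Imp.Eqvg hfree hproper hsrc hopen hsurj).lact_principal,
    Imp.Eqvg hfree hproper hsrc hopen hsurj, rfl, rfl⟩
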